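/- arXiv:2604.25637 — 2 statements merged into one kernel-verified Lean document; each statement's English description precedes it below -/
import Mathlib

section
/- Let n ≥ 3 and E = ℤ/nℤ. Define a triple {i,j,k} of distinct elements of E to be dependent iff i + j + k ≡ 0 (mod n), and call all 3-element subsets not of this form bases. Then this collection of bases satisfies the basis exchange axiom: for any two bases A, B and any a ∈ A \ B, there exists b ∈ B \ A such that (A \ {a}) ∪ {b} is a basis. -/
/-- Basis exchange axiom for the matroid `T_n`: bases are 3-element subsets of
`ℤ/nℤ` whose elements do not sum to `0`. -/
theorem Tn_basis_exchange (n : ℕ) (hn : 3 ≤ n) [NeZero n]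
    (A B : Finset (ZMod n))
    (hA : A.card = 3 ∧ A.sum id ≠ 0)
    (hB : B.card = 3 ∧ B.sum id ≠ 0)
    (a : ZMod n) (ha : a ∈ A \ B) :
    ∃ b ∈ B \ A,
      (insert b (A.erase a)).card = 3 ∧ (insert b (A.erase a)).sum id ≠ 0 := by
  obtain ⟨hA3, hAs⟩ := hA
  obtain ⟨hB3, hBs⟩ := hB
  rw [Finset.mem_sdiff] at ha
  obtain ⟨haA, haB⟩ := ha
  set S := A.sum id with hS
  by_cases h : ∃ b ∈ B \ A, b ≠ a - S
  · obtain ⟨b, hb, hbne⟩ := h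
    have hbB := hb
    rw [Finset.mem_sdiff] at hbB
    have hbnotin : b ∉ A.erase a := fun hmem => hbB.2 (Finset.mem_of_mem_erase hmem)
    refine ⟨b, hb, ?_, ?_⟩
    · rw [Finset.card_insert_of_notMem hbnotin, Finset.card_erase_of_mem haA, hA3]
    · rw [Finset.sum_insert hbnotin, Finset.sum_erase_eq_sub haA]
      intro h0
      apply hbne
      simp only [id] at h0 hS
      linear_combination h0 + hS
  · push_neg at h
    exfalso
    have hsub : B \ A ⊆ {a - S} := fun b hb => Finset.mem_singleton.mpr (h b hb)
    have hcard1 : (B \ A).card ≤ 1 :=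
      (Finset.card_le_card hsub).trans_eq (Finset.card_singleton _)
    have hBA := Finset.card_sdiff_add_card_inter B A
    have hAB := Finset.card_sdiff_add_card_inter A B
    have hAdB1 : 1 ≤ (A \ B).card :=
      Finset.card_pos.mpr ⟨a, Finset.mem_sdiff.mpr ⟨haA, haB⟩⟩
    rw [hB3] at hBA
    rw [hA3] at hAB
    have hBAeq : (B \ A).card = 1 := by
      have : (B ∩ A).card = (A ∩ B).card := by rw [Finset.inter_comm]
      omega
    have hAdBeq : (A \ B).card = 1 := by
      have : (B ∩ A).card = (A ∩ B).card := by rw [Finset.inter_comm]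
      omega
    have hBAset : B \ A = {a - S} :=
      Finset.eq_of_subset_of_card_le hsub (by rw [hBAeq, Finset.card_singleton])
    have hABset : A \ B = {a} := by
      rw [Finset.card_eq_one] at hAdBeq
      obtain ⟨x, hx⟩ := hAdBeq
      have : a ∈ ({x} : Finset (ZMod n)) := hx ▸ Finset.mem_sdiff.mpr ⟨haA, haB⟩
      rw [Finset.mem_singleton] at this
      rw [hx, this]
    have h1 := Finset.sum_inter_add_sum_sdiff B A id
    have h2 := Finset.sum_inter_add_sum_sdiff A B id
    rw [hBAset, Finset.sum_singleton] at h1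
    rw [hABset, Finset.sum_singleton] at h2
    rw [Finset.inter_comm] at h1
    apply hBs
    rw [← h1]
    simp only [id] at *
    linear_combination h2 - hS
end

section
/- Let g ∈ ℂ[x,y,z] be nonzero homogeneous of degree d−1 ≥ 2, f = w·g, and let D' be the ℂ[x,y,z,w]-submodule of syzygies of (f_x,f_y,f_z,f_w) generated by the lifts (a,b,c,0) of all syzygies (a,b,c) of (g_x,g_y,g_z) together with ρ₀ = (x,y,z,−(d−1)w). Then every syzygy of (f_x,f_y,f_z,f_w) lies in D'. That is, ρ₀ and the lifted syzygies of g generate the module D₀(f) of derivations annihilating f. -/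
open MvPolynomial


noncomputable section ConeSyz

/-- The algebra map killing the last variable. -/
noncomputable def kk : MvPolynomial (Fin 4) ℂ →ₐ[ℂ] MvPolynomial (Fin 3) ℂ :=
  aeval (Fin.lastCases 0 X)

lemma kk_rename (q : MvPolynomial (Fin 3) ℂ) : kk (rename Fin.castSucc q) = q := by
  rw [kk, aeval_rename]
  have : (Fin.lastCases 0 X ∘ Fin.castSucc : Fin 3 → MvPolynomial (Fin 3) ℂ) = X := by
    funext j; simp [Function.comp, Fin.lastCases_castSucc]
  rw [this]
  simp [aeval_X_left]

lemma kk_X3 : kk (X 3 : MvPolynomial (Fin 4) ℂ) = 0 := by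
  have h3 : (3 : Fin 4) = Fin.last 3 := rfl
  rw [kk, aeval_X, h3, Fin.lastCases_last]

lemma castSucc_ne_three (j : Fin 3) : Fin.castSucc j ≠ 3 := (Fin.castSucc_lt_last j).ne

/-- A polynomial not involving the last variable is a rename. -/
lemma wfree_exists {p : MvPolynomial (Fin 4) ℂ} (h : ∀ m ∈ p.support, m 3 = 0) :
    ∃ q, rename Fin.castSucc q = p := by
  apply exists_rename_eq_of_vars_subset_range p Fin.castSucc (Fin.castSucc_injective 3)
  intro i hi
  rw [Finset.mem_coe, mem_vars] at hi
  obtain ⟨m, hm, him⟩ := hi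
  have hne : m i ≠ 0 := Finsupp.mem_support_iff.mp him
  have hi3 : i ≠ 3 := by rintro rfl; exact hne (h m hm)
  have : i ≠ Fin.last 3 := hi3
  obtain ⟨j, rfl⟩ := Fin.exists_castSucc_eq.mpr this
  exact ⟨j, rfl⟩

/-- Decomposition of a polynomial into its w-free part and a multiple of w. -/
lemma decomp (p : MvPolynomial (Fin 4) ℂ) :
    ∃ r, p = rename Fin.castSucc (kk p) + X 3 * r := by
  classical
  set q := p.modMonomial (Finsupp.single 3 1) with hq
  set r := p.divMonomial (Finsupp.single 3 1) with hr
  have hsum : X 3 * r + q = p := divMonomial_add_modMonomial_single p 3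
  have hqfree : ∀ m ∈ q.support, m 3 = 0 := by
    intro m hm
    by_contra hne
    have hle : Finsupp.single (3 : Fin 4) 1 ≤ m := by
      rw [Finsupp.single_le_iff]; omega
    exact Finsupp.mem_support_iff.mp hm (coeff_modMonomial_of_le p hle)
  obtain ⟨q', hq'⟩ := wfree_exists hqfree
  have hkp : kk p = q' := by
    rw [← hsum, map_add, map_mul, kk_X3, zero_mul, zero_add, ← hq', kk_rename]
  exact ⟨r, by rw [hkp, hq', ← hsum, add_comm]⟩

lemma dvd_of_kk_zero {p : MvPolynomial (Fin 4) ℂ} (h : kk p = 0) :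
    ∃ r, p = X 3 * r := by
  obtain ⟨r, hrr⟩ := decomp p
  exact ⟨r, by rwa [h, map_zero, zero_add] at hrr⟩

lemma rename_coeff_zero (q : MvPolynomial (Fin 3) ℂ) {m : Fin 4 →₀ ℕ} (hm : m 3 ≠ 0) :
    coeff m (rename Fin.castSucc q) = 0 := by
  by_contra h
  have hmem : m ∈ (rename Fin.castSucc q).support := Finsupp.mem_support_iff.mpr h
  have h3 : (3 : Fin 4) ∈ (rename Fin.castSucc q).vars :=
    (mem_vars 3).mpr ⟨m, hmem, Finsupp.mem_support_iff.mpr hm⟩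
  obtain ⟨j, _, hj⟩ := mem_vars_rename _ _ h3
  exact castSucc_ne_three j hj

lemma coeff_shift {p : MvPolynomial (Fin 4) ℂ} {q : MvPolynomial (Fin 3) ℂ}
    {r : MvPolynomial (Fin 4) ℂ} (h : p = rename Fin.castSucc q + X 3 * r)
    (m : Fin 4 →₀ ℕ) : coeff m r = coeff (m + Finsupp.single 3 1) p := by
  have h1 : coeff (m + Finsupp.single 3 1) (X 3 * r) = coeff m r := by
    rw [mul_comm]; exact coeff_mul_X m 3 r
  have h2 : coeff (m + Finsupp.single 3 1) (rename Fin.castSucc q) = 0 := by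
    apply rename_coeff_zero
    simp [Finsupp.add_apply]
  rw [h, coeff_add, h1, h2, zero_add]

lemma deg_r_le {p : MvPolynomial (Fin 4) ℂ} {q : MvPolynomial (Fin 3) ℂ}
    {r : MvPolynomial (Fin 4) ℂ} (h : p = rename Fin.castSucc q + X 3 * r)
    {n : ℕ} (hp : p.degreeOf 3 ≤ n + 1) : r.degreeOf 3 ≤ n := by
  rw [degreeOf_le_iff]
  intro m hm
  have hc := coeff_shift h m
  have hne : coeff (m + Finsupp.single 3 1) p ≠ 0 := by
    rw [← hc]; exact Finsupp.mem_support_iff.mp hm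
  have := degreeOf_le_iff.mp hp _ (Finsupp.mem_support_iff.mpr hne)
  simp [Finsupp.add_apply] at this
  omega

lemma r_eq_zero {p : MvPolynomial (Fin 4) ℂ} {q : MvPolynomial (Fin 3) ℂ}
    {r : MvPolynomial (Fin 4) ℂ} (h : p = rename Fin.castSucc q + X 3 * r)
    (hp : p.degreeOf 3 = 0) : r = 0 := by
  rw [← support_eq_empty, Finset.eq_empty_iff_forall_notMem]
  intro m hm
  have hc := coeff_shift h m
  have hne : coeff (m + Finsupp.single 3 1) p ≠ 0 := by
    rw [← hc]; exact Finsupp.mem_support_iff.mp hm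
  have := degreeOf_le_iff.mp hp.le _ (Finsupp.mem_support_iff.mpr hne)
  simp [Finsupp.add_apply] at this

/-- Euler's identity for homogeneous polynomials. -/
lemma euler_id {n : ℕ} {p : MvPolynomial (Fin 3) ℂ} (hp : p.IsHomogeneous n) :
    ∑ i, X i * pderiv i p = (n : MvPolynomial (Fin 3) ℂ) * p := by
  classical
  have key : ∀ m ∈ p.support,
      ∑ i : Fin 3, X i * pderiv i (monomial m (coeff m p))
        = (n : MvPolynomial (Fin 3) ℂ) * monomial m (coeff m p) := by
    intro m hm
    have hdeg : ∑ i : Fin 3, m i = n := by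
      have h1 := hp (Finsupp.mem_support_iff.mp hm)
      rw [show (Finsupp.weight 1 : (Fin 3 →₀ ℕ) →+ ℕ) = Finsupp.weight (fun _ => 1) from rfl,
        ← Finsupp.degree_eq_weight_one] at h1
      rw [← h1, Finsupp.degree]
      exact (Finset.sum_subset (Finset.subset_univ _)
        (fun i _ hi => Finsupp.notMem_support_iff.mp hi)).symm
    have step : ∀ i : Fin 3, X i * pderiv i (monomial m (coeff m p))
        = monomial m (coeff m p * m i) := by
      intro i
      rw [pderiv_monomial]
      by_cases h : m i = 0
      · simp [h]
      · have hle : Finsupp.single i 1 ≤ m := by rw [Finsupp.single_le_iff]; omega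
        rw [X, monomial_mul, one_mul, add_tsub_cancel_of_le hle]
    rw [Finset.sum_congr rfl (fun i _ => step i), ← map_sum]
    have hn : (n : MvPolynomial (Fin 3) ℂ) = C (n : ℂ) := (map_natCast C n).symm
    rw [hn, C_mul_monomial]
    congr 1
    rw [← Finset.mul_sum, ← Nat.cast_sum, hdeg, mul_comm]
  conv_lhs => rw [show (∑ i, X i * pderiv i p) = ∑ i, X i * pderiv i (∑ m ∈ p.support, monomial m (coeff m p)) by rw [← p.as_sum]]
  simp only [map_sum, Finset.mul_sum]
  rw [Finset.sum_comm, Finset.sum_congr rfl (fun m hm => by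
    rw [show ∑ i : Fin 3, X i * pderiv i (monomial m (coeff m p)) = (n : MvPolynomial (Fin 3) ℂ) * monomial m (coeff m p) from key m hm]),
    ← Finset.mul_sum, ← p.as_sum]

end ConeSyz

/-- Syzygies of the renamed partials with w-free "vector of zeros in last slot" lie in the span
of lifted syzygies. -/
lemma liftSpan (g : MvPolynomial (Fin 3) ℂ) (n : ℕ) :
    ∀ p : Fin 3 → MvPolynomial (Fin 4) ℂ,
      (∀ i, (p i).degreeOf 3 ≤ n) →
      (∑ i, p i * rename Fin.castSucc (pderiv i g) = 0) →
      ![p 0, p 1, p 2, 0] ∈ Submodule.span (MvPolynomial (Fin 4) ℂ)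
        {u : Fin 4 → MvPolynomial (Fin 4) ℂ |
          ∃ a b c : MvPolynomial (Fin 3) ℂ,
            a * pderiv 0 g + b * pderiv 1 g + c * pderiv 2 g = 0 ∧
            u = ![rename Fin.castSucc a, rename Fin.castSucc b,
                  rename Fin.castSucc c, 0]} := by
  induction n with
  | zero =>
    intro p hdeg hsyz
    choose r hr using fun i => decomp (p i)
    have hr0 : ∀ i, r i = 0 := fun i =>
      r_eq_zero (hr i) (Nat.le_zero.mp (hdeg i))
    have hp : ∀ i, p i = rename Fin.castSucc (kk (p i)) := by
      intro i
      conv_lhs => rw [hr i]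
      rw [hr0 i, mul_zero, add_zero]
    apply Submodule.subset_span
    refine ⟨kk (p 0), kk (p 1), kk (p 2), ?_, ?_⟩
    · have := congrArg kk hsyz
      simp only [map_sum, map_mul, kk_rename, map_zero] at this
      rw [Fin.sum_univ_three] at this
      exact this
    · funext j; fin_cases j
      · simpa using hp 0
      · simpa using hp 1
      · simpa using hp 2
      · simp
  | succ n ih =>
    intro p hdeg hsyz
    choose r hr using fun i => decomp (p i)
    have hrdeg : ∀ i, (r i).degreeOf 3 ≤ n := fun i => deg_r_le (hr i) (hdeg i)
    have hqsyz : ∑ i, kk (p i) * pderiv i g = 0 := by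
      have := congrArg kk hsyz
      simpa only [map_sum, map_mul, kk_rename, map_zero] using this
    have hrsyz : ∑ i, r i * rename Fin.castSucc (pderiv i g) = 0 := by
      have h0 : X 3 * (∑ i, r i * rename Fin.castSucc (pderiv i g)) = 0 := by
        have expand : ∑ i, p i * rename Fin.castSucc (pderiv i g)
            = rename Fin.castSucc (∑ i, kk (p i) * pderiv i g)
              + X 3 * (∑ i, r i * rename Fin.castSucc (pderiv i g)) := by
          simp only [map_sum, map_mul, Finset.mul_sum]
          rw [← Finset.sum_add_distrib]
          refine Finset.sum_congr rfl fun i _ => ?_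
          nth_rewrite 1 [hr i]
          ring
        rw [expand, hqsyz, map_zero, zero_add] at hsyz
        exact hsyz
      rcases mul_eq_zero.mp h0 with h | h
      · exact absurd h (X_ne_zero 3)
      · exact h
    have hmemq : ![rename Fin.castSucc (kk (p 0)), rename Fin.castSucc (kk (p 1)),
        rename Fin.castSucc (kk (p 2)), 0] ∈ Submodule.span (MvPolynomial (Fin 4) ℂ)
        {u : Fin 4 → MvPolynomial (Fin 4) ℂ |
          ∃ a b c : MvPolynomial (Fin 3) ℂ,
            a * pderiv 0 g + b * pderiv 1 g + c * pderiv 2 g = 0 ∧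
            u = ![rename Fin.castSucc a, rename Fin.castSucc b,
                  rename Fin.castSucc c, 0]} := by
      apply Submodule.subset_span
      exact ⟨kk (p 0), kk (p 1), kk (p 2), by rw [Fin.sum_univ_three] at hqsyz; exact hqsyz, rfl⟩
    have hmemr := ih r hrdeg hrsyz
    have hvec : ![p 0, p 1, p 2, 0]
        = ![rename Fin.castSucc (kk (p 0)), rename Fin.castSucc (kk (p 1)),
            rename Fin.castSucc (kk (p 2)), 0]
          + (X 3 : MvPolynomial (Fin 4) ℂ) • ![r 0, r 1, r 2, 0] := by
      funext j
      fin_cases j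
      · simpa using hr 0
      · simpa using hr 1
      · simpa using hr 2
      · simp
    rw [hvec]
    exact Submodule.add_mem _ hmemq (Submodule.smul_mem _ _ hmemr)

/-- For `g ∈ ℂ[x,y,z]` nonzero homogeneous of degree `e = d-1 ≥ 2` and
`f = w·g`, every Jacobian syzygy of `f` lies in the submodule generated by
`ρ₀ = (x,y,z,−e·w)` together with the lifts `(a,b,c,0)` of the Jacobian
syzygies of `g`. -/
theorem cone_syzygies_generated (e : ℕ) (he : 2 ≤ e)
    (g : MvPolynomial (Fin 3) ℂ) (hg0 : g ≠ 0) (hg : g.IsHomogeneous e)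
    (f : MvPolynomial (Fin 4) ℂ)
    (hf : f = X 3 * rename Fin.castSucc g)
    (v : Fin 4 → MvPolynomial (Fin 4) ℂ)
    (hv : ∑ i, v i * pderiv i f = 0) :
    v ∈ Submodule.span (MvPolynomial (Fin 4) ℂ)
      (insert (![X 0, X 1, X 2, - C (e : ℂ) * X 3])
        {u : Fin 4 → MvPolynomial (Fin 4) ℂ |
          ∃ a b c : MvPolynomial (Fin 3) ℂ,
            a * pderiv 0 g + b * pderiv 1 g + c * pderiv 2 g = 0 ∧
            u = ![rename Fin.castSucc a, rename Fin.castSucc b,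
                  rename Fin.castSucc c, 0]}) := by
  classical
  have he0 : (e : ℂ) ≠ 0 := Nat.cast_ne_zero.mpr (by omega)
  set T : MvPolynomial (Fin 3) ℂ →ₐ[ℂ] MvPolynomial (Fin 4) ℂ := rename Fin.castSucc with hT
  -- partial derivatives of f
  have hpd3 : ∀ q : MvPolynomial (Fin 3) ℂ, pderiv 3 (T q) = 0 := by
    intro q
    apply pderiv_eq_zero_of_notMem_vars
    intro h
    obtain ⟨j, _, hj⟩ := mem_vars_rename _ _ h
    exact castSucc_ne_three j hj
  have hd : ∀ j : Fin 3, pderiv (Fin.castSucc j) f = X 3 * T (pderiv j g) := by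
    intro j
    rw [hf, pderiv_mul, pderiv_X_of_ne (Ne.symm (castSucc_ne_three j)), zero_mul, zero_add]
    rw [hT, pderiv_rename (Fin.castSucc_injective 3)]
  have hd3 : pderiv 3 f = T g := by
    rw [hf, pderiv_mul, pderiv_X_self, one_mul, hpd3, mul_zero, add_zero]
  have h0 : pderiv (0 : Fin 4) f = X 3 * T (pderiv 0 g) := hd 0
  have h1 : pderiv (1 : Fin 4) f = X 3 * T (pderiv 1 g) := hd 1
  have h2 : pderiv (2 : Fin 4) f = X 3 * T (pderiv 2 g) := hd 2
  rw [Fin.sum_univ_four, h0, h1, h2, hd3] at hv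
  -- divide out w from v 3
  have hkv3 : kk (v 3) = 0 := by
    have := congrArg kk hv
    simp only [map_add, map_mul, map_zero, kk_X3, zero_mul, mul_zero, add_zero,
      zero_add] at this
    have hkTg : kk (T g) = g := kk_rename g
    rw [hkTg] at this
    exact (mul_eq_zero.mp this).resolve_right hg0
  obtain ⟨t, hv3⟩ := dvd_of_kk_zero hkv3
  -- divide the syzygy by w
  have hA : v 0 * T (pderiv 0 g) + v 1 * T (pderiv 1 g) + v 2 * T (pderiv 2 g)
      + t * T g = 0 := by
    have hw : X 3 * (v 0 * T (pderiv 0 g) + v 1 * T (pderiv 1 g) + v 2 * T (pderiv 2 g)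
        + t * T g) = 0 := by
      rw [← hv, hv3]; ring
    exact (mul_eq_zero.mp hw).resolve_left (X_ne_zero 3)
  -- Euler identity transported
  have hEuler : (X 0 : MvPolynomial (Fin 4) ℂ) * T (pderiv 0 g)
      + X 1 * T (pderiv 1 g) + X 2 * T (pderiv 2 g) = C (e : ℂ) * T g := by
    have h := euler_id hg
    have h4 := congrArg T h
    rw [Fin.sum_univ_three] at h4
    simp only [map_add, map_mul, hT, rename_X] at h4
    have hc : ((rename (Fin.castSucc) : MvPolynomial (Fin 3) ℂ →ₐ[ℂ] _)
        ((e : MvPolynomial (Fin 3) ℂ)) : MvPolynomial (Fin 4) ℂ)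
        = (e : MvPolynomial (Fin 4) ℂ) := map_natCast _ e
    rw [hc] at h4
    rw [show (Fin.castSucc (0 : Fin 3)) = (0 : Fin 4) from rfl,
        show (Fin.castSucc (1 : Fin 3)) = (1 : Fin 4) from rfl,
        show (Fin.castSucc (2 : Fin 3)) = (2 : Fin 4) from rfl] at h4
    rw [show (C (e : ℂ) : MvPolynomial (Fin 4) ℂ) = (e : MvPolynomial (Fin 4) ℂ) from
      map_natCast C e]
    exact h4
  set c : MvPolynomial (Fin 4) ℂ := C ((e : ℂ)⁻¹) * t with hcdef
  have hc : C ((e : ℂ)⁻¹) * C ((e : ℂ)) = (1 : MvPolynomial (Fin 4) ℂ) := by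
    rw [← C_mul, inv_mul_cancel₀ he0, C_1]
  set a : Fin 3 → MvPolynomial (Fin 4) ℂ :=
    fun i => v (Fin.castSucc i) + c * X (Fin.castSucc i) with hadef
  have hasyz : ∑ i, a i * T (pderiv i g) = 0 := by
    rw [Fin.sum_univ_three, hadef]
    simp only
    rw [show (Fin.castSucc (0 : Fin 3)) = (0 : Fin 4) from rfl,
        show (Fin.castSucc (1 : Fin 3)) = (1 : Fin 4) from rfl,
        show (Fin.castSucc (2 : Fin 3)) = (2 : Fin 4) from rfl]
    linear_combination hA + c * hEuler + t * (T g) * hc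
  have hmemA := liftSpan g ((degreeOf 3 (a 0) ⊔ degreeOf 3 (a 1)) ⊔ degreeOf 3 (a 2)) a
    (fun i => by fin_cases i <;> simp [le_sup_left, le_sup_right]) hasyz
  have hvec : v = ![a 0, a 1, a 2, 0]
      - c • ![X 0, X 1, X 2, - C (e : ℂ) * X 3] := by
    funext j
    simp only [Pi.sub_apply, Pi.smul_apply, smul_eq_mul]
    fin_cases j
    · show v 0 = (v 0 + c * X 0) - c * X 0
      ring
    · show v 1 = (v 1 + c * X 1) - c * X 1
      ring
    · show v 2 = (v 2 + c * X 2) - c * X 2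
      ring
    · show v 3 = 0 - C ((e : ℂ)⁻¹) * t * (- C (e : ℂ) * X 3)
      linear_combination hv3 - (X 3 * t) * hc
  rw [hvec]
  refine Submodule.sub_mem _ ?_ ?_
  · exact Submodule.span_mono (Set.subset_insert _ _) hmemA
  · exact Submodule.smul_mem _ c (Submodule.subset_span (Set.mem_insert _ _))
end
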